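/- Let n ≥ 1 and let μ be the Haar probability measure on SO(n). Then for every x = (x₁,…,xₙ) ∈ ℝⁿ and every pair of distinct indices i ≠ j: ∫_{SO(n)} ( x_j·y_{ji} − x_i·y_{ij} ) · exp(Σ_{k=1}^n x_k y_{kk}) dμ(y) = 0, and ∫_{SO(n)} ( x_j·y_{ij} − x_i·y_{ji} ) · exp(Σ_{k=1}^n x_k y_{kk}) dμ(y) = 0, where y_{ab} denotes the (a,b) entry of the matrix y. -/

import Mathlib

open MeasureTheory Matrix

attribute [local instance] Matrix.normedAddCommGroup Matrix.normedSpace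

noncomputable instance matrixMeasurableSpace (n : ℕ) :
    MeasurableSpace (Matrix (Fin n) (Fin n) ℝ) := borel _

/-- The special orthogonal group `SO(n)`, viewed as a subset of the space of
`n × n` real matrices. -/
def SO (n : ℕ) : Set (Matrix (Fin n) (Fin n) ℝ) :=
  {y | yᵀ * y = 1 ∧ y.det = 1}

instance (n : ℕ) : BorelSpace (Matrix (Fin n) (Fin n) ℝ) := ⟨rfl⟩

namespace SOaux
variable {n : ℕ}

lemma mul_mem {a b : Matrix (Fin n) (Fin n) ℝ} (ha : a ∈ SO n) (hb : b ∈ SO n) :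
    a * b ∈ SO n := by
  obtain ⟨ha1, ha2⟩ := ha; obtain ⟨hb1, hb2⟩ := hb
  constructor
  · rw [transpose_mul]
    calc bᵀ * aᵀ * (a * b) = bᵀ * (aᵀ * a) * b := by rw [mul_assoc, mul_assoc, mul_assoc]
      _ = 1 := by rw [ha1, mul_one, hb1]
  · rw [det_mul, ha2, hb2, one_mul]

lemma transpose_mem {a : Matrix (Fin n) (Fin n) ℝ} (ha : a ∈ SO n) : aᵀ ∈ SO n := by
  obtain ⟨ha1, ha2⟩ := ha
  have hinv : a * aᵀ = 1 := by
    have := mul_eq_one_comm.mp ha1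
    simpa using this
  exact ⟨by simpa using hinv, by rw [det_transpose, ha2]⟩

lemma entry_le_one {a : Matrix (Fin n) (Fin n) ℝ} (ha : a ∈ SO n) (p q : Fin n) :
    |a p q| ≤ 1 := by
  have h : ∑ m, a m q * a m q = 1 := by
    have := congrFun (congrFun ha.1 q) q
    simpa [Matrix.mul_apply, Matrix.one_apply, transpose_apply] using this
  have h1 : a p q * a p q ≤ 1 := by
    rw [← h]
    exact Finset.single_le_sum (f := fun m => a m q * a m q)
      (fun m _ => mul_self_nonneg _) (Finset.mem_univ p)
  nlinarith [abs_nonneg (a p q), sq_abs (a p q)]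

lemma isClosed_SO : IsClosed (SO n) := by
  have h1 : IsClosed {y : Matrix (Fin n) (Fin n) ℝ | yᵀ * y = 1} :=
    isClosed_eq ((continuous_id.matrix_transpose).matrix_mul continuous_id) continuous_const
  have h2 : IsClosed {y : Matrix (Fin n) (Fin n) ℝ | y.det = 1} :=
    isClosed_eq (continuous_id.matrix_det) continuous_const
  exact h1.inter h2

lemma measurableSet_SO : MeasurableSet (SO n) := isClosed_SO.measurableSet

end SOaux


section Rm
variable {n : ℕ} (i j : Fin n)

noncomputable def Rm (t : ℝ) : Matrix (Fin n) (Fin n) ℝ :=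
  1 + (Real.cos t - 1) • (Matrix.single i i (1:ℝ) + Matrix.single j j 1)
    + Real.sin t • (Matrix.single j i (1:ℝ) - Matrix.single i j 1)

lemma transpose_std (a b : Fin n) : (Matrix.single a b (1:ℝ))ᵀ = Matrix.single b a 1 := by
  ext p q
  simp [Matrix.single, and_comm]

variable (hij : i ≠ j)
include hij

lemma Rm_orthogonal (t : ℝ) : (Rm i j t)ᵀ * Rm i j t = 1 := by
  set P : Matrix (Fin n) (Fin n) ℝ := Matrix.single i i 1 + Matrix.single j j 1 with hP
  set Q : Matrix (Fin n) (Fin n) ℝ := Matrix.single j i 1 - Matrix.single i j 1 with hQ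
  have hP2 : P * P = P := by
    simp [hP, add_mul, mul_add, single_mul_single_same,
      single_mul_single_of_ne _ _ _ _ hij, single_mul_single_of_ne _ _ _ _ hij.symm]
  have hQ2 : Q * Q = -P := by
    simp [hQ, hP, sub_mul, mul_sub, single_mul_single_same,
      single_mul_single_of_ne _ _ _ _ hij, single_mul_single_of_ne _ _ _ _ hij.symm]
    try abel
  have hPQ : P * Q = Q := by
    simp [hP, hQ, add_mul, mul_sub, single_mul_single_same,
      single_mul_single_of_ne _ _ _ _ hij, single_mul_single_of_ne _ _ _ _ hij.symm]
    try abel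
  have hQP : Q * P = Q := by
    simp [hP, hQ, sub_mul, mul_add, single_mul_single_same,
      single_mul_single_of_ne _ _ _ _ hij, single_mul_single_of_ne _ _ _ _ hij.symm]
    try abel
  have expand : ∀ α β γ δ : ℝ, (1 + α • P + β • Q) * (1 + γ • P + δ • Q)
      = 1 + (α + γ + α * γ - β * δ) • P + (β + δ + α * δ + β * γ) • Q := by
    intro α β γ δ
    simp only [add_mul, mul_add, one_mul, mul_one, smul_mul_assoc, mul_smul_comm,
      hP2, hQ2, hPQ, hQP, smul_smul, smul_neg]
    module
  have hRT : (Rm i j t)ᵀ = 1 + (Real.cos t - 1) • P + (-Real.sin t) • Q := by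
    simp only [Rm, transpose_add, transpose_smul, transpose_one, transpose_sub,
      transpose_std, hP, hQ]
    module
  rw [hRT, Rm, ← hP, ← hQ, expand]
  have hc := Real.sin_sq_add_cos_sq t
  have e1 : (Real.cos t - 1) + (Real.cos t - 1) + (Real.cos t - 1) * (Real.cos t - 1)
      - (-Real.sin t) * Real.sin t = 0 := by nlinarith
  have e2 : (-Real.sin t) + Real.sin t + (Real.cos t - 1) * Real.sin t
      + (-Real.sin t) * (Real.cos t - 1) = 0 := by ring
  rw [e1, e2]
  simp

end Rm

section Rdet
variable {n : ℕ} (i j : Fin n) (hij : i ≠ j)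

lemma Rm_zero : Rm i j 0 = 1 := by
  simp [Rm]

lemma Rm_continuous : Continuous fun t => Rm i j (n := n) t := by
  unfold Rm
  fun_prop

include hij in
lemma Rm_det (t : ℝ) : (Rm i j t).det = 1 := by
  set d : ℝ → ℝ := fun t => (Rm i j t).det with hd
  have hsq : ∀ t, d t * d t = 1 := by
    intro t
    have h := congrArg Matrix.det (Rm_orthogonal i j hij t)
    rwa [det_mul, det_transpose, det_one] at h
  have hd0 : d 0 = 1 := by simp [hd, Rm_zero]
  have hcont : Continuous d := (Rm_continuous i j).matrix_det
  by_contra h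
  have hneg : d t = -1 := by
    have := hsq t
    rcases mul_self_eq_one_iff.mp this with h1 | h1
    · exact absurd h1 h
    · exact h1
  have h0 : (0:ℝ) ∈ Set.Icc (d t) (d 0) := by
    rw [hneg, hd0]; constructor <;> norm_num
  obtain ⟨s, hs⟩ := intermediate_value_univ t 0 hcont h0
  have := hsq s
  rw [hs] at this
  norm_num at this

include hij in
lemma Rm_mem_SO (t : ℝ) : Rm i j t ∈ SO n :=
  ⟨Rm_orthogonal i j hij t, Rm_det i j hij t⟩

end Rdet

section Exponent
variable {n : ℕ} (i j : Fin n)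

lemma sum_std_mul (x : Fin n → ℝ) (y : Matrix (Fin n) (Fin n) ℝ) (a b : Fin n) :
    ∑ k, x k * ((Matrix.single a b (1:ℝ) * y) k k) = x a * y b a := by
  rw [Finset.sum_eq_single a]
  · rw [single_mul_apply_same, one_mul]
  · intro k _ hk
    rw [single_mul_apply_of_ne _ _ _ _ _ hk, mul_zero]
  · intro h; exact absurd (Finset.mem_univ a) h

lemma exponent_eq (x : Fin n → ℝ) (t : ℝ) (y : Matrix (Fin n) (Fin n) ℝ) :
    ∑ k, x k * ((Rm i j t * y) k k)
      = ((∑ k, x k * y k k) - (x i * y i i + x j * y j j))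
        + Real.cos t * (x i * y i i + x j * y j j)
        + Real.sin t * (x j * y i j - x i * y j i) := by
  have hmul : Rm i j t * y = y + (Real.cos t - 1) • (Matrix.single i i (1:ℝ) * y
        + Matrix.single j j (1:ℝ) * y)
      + Real.sin t • (Matrix.single j i (1:ℝ) * y - Matrix.single i j (1:ℝ) * y) := by
    simp only [Rm, add_mul, sub_mul, one_mul, smul_mul_assoc, mul_add, mul_sub, smul_add,
      smul_sub]
  have hentry : ∀ k, x k * ((Rm i j t * y) k k)
      = x k * y k k
        + (Real.cos t - 1) * (x k * ((Matrix.single i i (1:ℝ) * y) k k)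
            + x k * ((Matrix.single j j (1:ℝ) * y) k k))
        + Real.sin t * (x k * ((Matrix.single j i (1:ℝ) * y) k k)
            - x k * ((Matrix.single i j (1:ℝ) * y) k k)) := by
    intro k
    rw [hmul]
    simp only [Matrix.add_apply, Matrix.smul_apply, Matrix.sub_apply, smul_eq_mul]
    ring
  simp only [hentry]
  rw [Finset.sum_add_distrib, Finset.sum_add_distrib, ← Finset.mul_sum, ← Finset.mul_sum,
    Finset.sum_add_distrib, Finset.sum_sub_distrib, sum_std_mul, sum_std_mul, sum_std_mul,
    sum_std_mul]
  ring

end Exponent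

section Key
open Real

lemma key {n : ℕ} {κ : Measure (Matrix (Fin n) (Fin n) ℝ)} [IsProbabilityMeasure κ]
    (S A B : Matrix (Fin n) (Fin n) ℝ → ℝ)
    (hS : Continuous S) (hA : Continuous A) (hB : Continuous B)
    (C : ℝ) (hbound : ∀ᵐ y ∂κ, |S y| ≤ C ∧ |A y| ≤ C ∧ |B y| ≤ C)
    (hconst : ∀ t : ℝ, (∫ y, Real.exp (S y + Real.cos t * A y + Real.sin t * B y) ∂κ)
        = ∫ y, Real.exp (S y + A y) ∂κ) :
    ∫ y, B y * Real.exp (S y + A y) ∂κ = 0 := by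
  set F : ℝ → Matrix (Fin n) (Fin n) ℝ → ℝ :=
    fun t y => Real.exp (S y + Real.cos t * A y + Real.sin t * B y) with hF
  set F' : ℝ → Matrix (Fin n) (Fin n) ℝ → ℝ :=
    fun t y => Real.exp (S y + Real.cos t * A y + Real.sin t * B y)
      * (-Real.sin t * A y + Real.cos t * B y) with hF'
  have hFcont : ∀ t, Continuous (F t) := fun t =>
    Real.continuous_exp.comp ((hS.add (continuous_const.mul hA)).add (continuous_const.mul hB))
  have hF'cont : ∀ t, Continuous (F' t) := fun t =>
    (hFcont t).mul ((continuous_const.mul hA).add (continuous_const.mul hB))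
  have hFbd : ∀ t y, |S y| ≤ C → |A y| ≤ C → |B y| ≤ C →
      Real.exp (S y + Real.cos t * A y + Real.sin t * B y) ≤ Real.exp (C + C + C) := by
    intro t y h1 h2 h3
    apply Real.exp_le_exp.mpr
    have hc : Real.cos t * A y ≤ C := by
      calc Real.cos t * A y ≤ |Real.cos t * A y| := le_abs_self _
        _ = |Real.cos t| * |A y| := abs_mul _ _
        _ ≤ 1 * C := by
            apply mul_le_mul (Real.abs_cos_le_one t) h2 (abs_nonneg _) zero_le_one
        _ = C := one_mul C
    have hs : Real.sin t * B y ≤ C := by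
      calc Real.sin t * B y ≤ |Real.sin t * B y| := le_abs_self _
        _ = |Real.sin t| * |B y| := abs_mul _ _
        _ ≤ 1 * C := by
            apply mul_le_mul (Real.abs_sin_le_one t) h3 (abs_nonneg _) zero_le_one
        _ = C := one_mul C
    have := le_abs_self (S y)
    linarith
  have hmain := hasDerivAt_integral_of_dominated_loc_of_deriv_le (μ := κ) (F := F) (F' := F')
    (x₀ := (0:ℝ)) (bound := fun _ => (C + C) * Real.exp (C + C + C)) (s := Metric.ball 0 1) (Metric.ball_mem_nhds _ one_pos)
    (Filter.Eventually.of_forall fun t => (hFcont t).aestronglyMeasurable)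
    ?hint ((hF'cont 0).aestronglyMeasurable) ?hbd
    (integrable_const _) ?hdiff
  case hint =>
    apply Integrable.mono' (integrable_const (Real.exp (C + C + C)))
      ((hFcont 0).aestronglyMeasurable)
    filter_upwards [hbound] with y hy
    rw [Real.norm_eq_abs, abs_of_pos (Real.exp_pos _)]
    exact hFbd 0 y hy.1 hy.2.1 hy.2.2
  case hbd =>
    filter_upwards [hbound] with y hy
    intro t _
    have hC0 : 0 ≤ C := le_trans (abs_nonneg _) hy.1
    rw [Real.norm_eq_abs, hF', abs_mul, abs_of_pos (Real.exp_pos _)]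
    have h1 : |(-Real.sin t * A y + Real.cos t * B y)| ≤ C + C := by
      calc |(-Real.sin t * A y + Real.cos t * B y)|
          ≤ |(-Real.sin t * A y)| + |Real.cos t * B y| := abs_add_le _ _
        _ = |Real.sin t| * |A y| + |Real.cos t| * |B y| := by
            rw [abs_mul, abs_mul, abs_neg]
        _ ≤ 1 * C + 1 * C := by
            gcongr
            · exact Real.abs_sin_le_one t
            · exact hy.2.1
            · exact Real.abs_cos_le_one t
            · exact hy.2.2
        _ = C + C := by ring
    calc Real.exp (S y + Real.cos t * A y + Real.sin t * B y)
          * |(-Real.sin t * A y + Real.cos t * B y)|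
        ≤ Real.exp (C + C + C) * (C + C) := by
          apply mul_le_mul (hFbd t y hy.1 hy.2.1 hy.2.2) h1 (abs_nonneg _)
            (le_of_lt (Real.exp_pos _))
      _ = (C + C) * Real.exp (C + C + C) := by ring
  case hdiff =>
    apply Filter.Eventually.of_forall
    intro y t _
    have h1 : HasDerivAt (fun t => S y + Real.cos t * A y + Real.sin t * B y)
        (-Real.sin t * A y + Real.cos t * B y) t := by
      have := (((hasDerivAt_const t (S y)).add
        ((Real.hasDerivAt_cos t).mul_const (A y))).add
        ((Real.hasDerivAt_sin t).mul_const (B y)))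
      exact this.congr_deriv (by ring)
    simpa [hF, hF'] using h1.exp
  obtain ⟨-, hderiv⟩ := hmain
  have hconst2 : (fun t => ∫ y, F t y ∂κ) = fun _ => ∫ y, Real.exp (S y + A y) ∂κ :=
    funext fun t => hconst t
  rw [hconst2] at hderiv
  have hzero : ∫ y, F' 0 y ∂κ = 0 := hderiv.unique (hasDerivAt_const 0 _)
  rw [← hzero]
  congr 1
  funext y
  simp [hF', mul_comm]

end Key

section AuxLeft
variable {n : ℕ}

lemma continuous_entry (a b : Fin n) :
    Continuous fun y : Matrix (Fin n) (Fin n) ℝ => y a b :=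
  continuous_id.matrix_elem a b

lemma continuous_trace_sum (x : Fin n → ℝ) :
    Continuous fun y : Matrix (Fin n) (Fin n) ℝ => ∑ k, x k * y k k :=
  continuous_finset_sum _ fun k _ => continuous_const.mul (continuous_entry k k)

lemma aux_left {κ : Measure (Matrix (Fin n) (Fin n) ℝ)} [IsProbabilityMeasure κ]
    (hae : ∀ᵐ y ∂κ, y ∈ SO n)
    (hinv : ∀ a ∈ SO n, Measure.map (fun y => a * y) κ = κ)
    (x : Fin n → ℝ) (i j : Fin n) (hij : i ≠ j) :
    ∫ y, (x j * y i j - x i * y j i) * Real.exp (∑ k, x k * y k k) ∂κ = 0 := by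
  set S : Matrix (Fin n) (Fin n) ℝ → ℝ :=
    fun y => (∑ k, x k * y k k) - (x i * y i i + x j * y j j) with hSdef
  set A : Matrix (Fin n) (Fin n) ℝ → ℝ :=
    fun y => x i * y i i + x j * y j j with hAdef
  set B : Matrix (Fin n) (Fin n) ℝ → ℝ :=
    fun y => x j * y i j - x i * y j i with hBdef
  have hSA : ∀ y, S y + A y = ∑ k, x k * y k k := fun y => sub_add_cancel _ _
  have hkey := key (κ := κ) S A B
    ((continuous_trace_sum x).sub (((continuous_const.mul (continuous_entry i i))).add
      (continuous_const.mul (continuous_entry j j))))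
    ((continuous_const.mul (continuous_entry i i)).add
      (continuous_const.mul (continuous_entry j j)))
    ((continuous_const.mul (continuous_entry i j)).sub
      (continuous_const.mul (continuous_entry j i)))
    ((∑ k, |x k|) + (|x i| + |x j|)) ?bound ?const
  case bound =>
    filter_upwards [hae] with y hy
    have hent : ∀ a b, |y a b| ≤ 1 := fun a b => SOaux.entry_le_one hy a b
    have habs : ∀ a b : Fin n, |x a * y a b| ≤ |x a| := by
      intro a b
      rw [abs_mul]
      calc |x a| * |y a b| ≤ |x a| * 1 := by
            exact mul_le_mul_of_nonneg_left (hent a b) (abs_nonneg _)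
        _ = |x a| := mul_one _
    have hsum : |∑ k, x k * y k k| ≤ ∑ k, |x k| := by
      calc |∑ k, x k * y k k| ≤ ∑ k, |x k * y k k| := Finset.abs_sum_le_sum_abs _ _
        _ ≤ ∑ k, |x k| := Finset.sum_le_sum fun k _ => habs k k
    have hxnonneg : (0:ℝ) ≤ ∑ k, |x k| := Finset.sum_nonneg fun k _ => abs_nonneg _
    refine ⟨?_, ?_, ?_⟩
    · calc |S y| ≤ |∑ k, x k * y k k| + |x i * y i i + x j * y j j| := abs_sub _ _
        _ ≤ (∑ k, |x k|) + (|x i| + |x j|) := by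
            refine add_le_add hsum ?_
            calc |x i * y i i + x j * y j j| ≤ |x i * y i i| + |x j * y j j| := abs_add_le _ _
              _ ≤ |x i| + |x j| := add_le_add (habs i i) (habs j j)
    · calc |A y| ≤ |x i * y i i| + |x j * y j j| := abs_add_le _ _
        _ ≤ |x i| + |x j| := add_le_add (habs i i) (habs j j)
        _ ≤ (∑ k, |x k|) + (|x i| + |x j|) := le_add_of_nonneg_left hxnonneg
    · calc |B y| ≤ |x j * y i j| + |x i * y j i| := abs_sub _ _
        _ ≤ |x j| + |x i| := by
            refine add_le_add ?_ ?_
            · rw [abs_mul]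
              exact (mul_le_mul_of_nonneg_left (hent i j) (abs_nonneg _)).trans
                (le_of_eq (mul_one _))
            · rw [abs_mul]
              exact (mul_le_mul_of_nonneg_left (hent j i) (abs_nonneg _)).trans
                (le_of_eq (mul_one _))
        _ ≤ (∑ k, |x k|) + (|x i| + |x j|) := by
            rw [add_comm (|x j|) (|x i|)]
            exact le_add_of_nonneg_left hxnonneg
  case const =>
    intro t
    have h1 : ∀ y : Matrix (Fin n) (Fin n) ℝ,
        S y + Real.cos t * A y + Real.sin t * B y = ∑ k, x k * ((Rm i j t * y) k k) :=
      fun y => (exponent_eq i j x t y).symm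
    have h2 : (∫ y, Real.exp (S y + Real.cos t * A y + Real.sin t * B y) ∂κ)
        = ∫ y, Real.exp (∑ k, x k * ((Rm i j t * y) k k)) ∂κ := by
      congr 1; funext y; rw [h1 y]
    rw [h2]
    have hmap := hinv (Rm i j t) (Rm_mem_SO i j hij t)
    have h3 : (∫ z, Real.exp (∑ k, x k * z k k) ∂κ)
        = ∫ y, Real.exp (∑ k, x k * ((Rm i j t * y) k k)) ∂κ := by
      conv_lhs => rw [← hmap]
      rw [integral_map]
      · exact (continuous_const.matrix_mul continuous_id).aemeasurable
      · exact (Real.continuous_exp.comp (continuous_trace_sum x)).aestronglyMeasurable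
    rw [← h3]
    congr 1; funext y; rw [hSA y]
  have h4 : (∫ y, (x j * y i j - x i * y j i) * Real.exp (∑ k, x k * y k k) ∂κ)
      = ∫ y, B y * Real.exp (S y + A y) ∂κ := by
    congr 1; funext y; rw [hSA y]
  rw [h4, hkey]

end AuxLeft


/-- `μ` is the Haar probability measure of `SO(n)`, viewed as a measure on the space of
`n × n` real matrices: it is a probability measure carried by `SO(n)` which is invariant
under left translation by elements of `SO(n)`. -/
structure IsHaarSO (n : ℕ) (μ : Measure (Matrix (Fin n) (Fin n) ℝ)) : Prop where
  isProbabilityMeasure : IsProbabilityMeasure μ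
  ae_mem : ∀ᵐ y ∂μ, y ∈ SO n
  left_invariant : ∀ a ∈ SO n, Measure.map (fun y => a * y) μ = μ

/-- The Fisher integral `f(x) = ∫_{SO(n)} exp(tr(x·y)) dμ(y)`, where
`tr(x·y) = Σᵢⱼ xᵢⱼ yᵢⱼ`. -/
noncomputable def fisher (n : ℕ) (μ : Measure (Matrix (Fin n) (Fin n) ℝ))
    (x : Matrix (Fin n) (Fin n) ℝ) : ℝ :=
  ∫ y, Real.exp (∑ i, ∑ j, x i j * y i j) ∂μ

/-- The partial derivative operator `∂/∂x_{a b}` in the `(a,b)` matrix-entry coordinate. -/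
noncomputable def pd {n : ℕ} (a b : Fin n) (g : Matrix (Fin n) (Fin n) ℝ → ℝ) :
    Matrix (Fin n) (Fin n) ℝ → ℝ :=
  fun x => fderiv ℝ g x (Matrix.single a b 1)

section Exchange
variable {n : ℕ}

lemma exchange {μ : Measure (Matrix (Fin n) (Fin n) ℝ)} (hμ : IsHaarSO n μ)
    (f : Matrix (Fin n) (Fin n) ℝ → ℝ) (hf : Continuous f)
    (M : ℝ) (hM : ∀ y ∈ SO n, |f y| ≤ M) :
    ∫ y, f y ∂μ = ∫ y, f yᵀ ∂μ := by
  haveI : IsProbabilityMeasure μ := hμ.isProbabilityMeasure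
  have htm : Measurable fun y : Matrix (Fin n) (Fin n) ℝ => yᵀ :=
    (continuous_id.matrix_transpose).measurable
  set ν := Measure.map (fun y : Matrix (Fin n) (Fin n) ℝ => yᵀ) μ with hν
  haveI : IsProbabilityMeasure ν := Measure.isProbabilityMeasure_map htm.aemeasurable
  have hml : ∀ a : Matrix (Fin n) (Fin n) ℝ,
      Continuous fun z : Matrix (Fin n) (Fin n) ℝ => a * z := fun a =>
    continuous_const.matrix_mul continuous_id
  have hmr : ∀ a : Matrix (Fin n) (Fin n) ℝ,
      Continuous fun z : Matrix (Fin n) (Fin n) ℝ => z * a := fun a =>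
    continuous_id.matrix_mul continuous_const
  have haeν : ∀ᵐ z ∂ν, z ∈ SO n := by
    rw [hν]
    refine (ae_map_iff htm.aemeasurable SOaux.measurableSet_SO).mpr ?_
    filter_upwards [hμ.ae_mem] with y hy using SOaux.transpose_mem hy
  have hrinv : ∀ a ∈ SO n, Measure.map (fun z => z * a) ν = ν := by
    intro a ha
    rw [hν, Measure.map_map (hmr a).measurable htm]
    have hcomp : ((fun z => z * a) ∘ fun y : Matrix (Fin n) (Fin n) ℝ => yᵀ)
        = (fun y : Matrix (Fin n) (Fin n) ℝ => yᵀ) ∘ (fun y => aᵀ * y) := by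
      funext y
      simp [Function.comp, transpose_mul]
    rw [hcomp, ← Measure.map_map htm (hml aᵀ).measurable,
      hμ.left_invariant aᵀ (SOaux.transpose_mem ha)]
  have hint : Integrable (Function.uncurry fun z y => f (z * y)) (ν.prod μ) := by
    have hc : Continuous (Function.uncurry fun z y : Matrix (Fin n) (Fin n) ℝ => f (z * y)) :=
      hf.comp (continuous_fst.matrix_mul continuous_snd)
    haveI : SecondCountableTopology (Matrix (Fin n) (Fin n) ℝ) :=
      inferInstanceAs (SecondCountableTopology (Fin n → Fin n → ℝ))
    apply Integrable.mono' (integrable_const M) hc.aestronglyMeasurable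
    have hae2 : ∀ᵐ p ∂(ν.prod μ), p.1 ∈ SO n ∧ p.2 ∈ SO n := by
      refine (Measure.ae_prod_iff_ae_ae (p := fun p => p.1 ∈ SO n ∧ p.2 ∈ SO n)
        (SOaux.measurableSet_SO.prod SOaux.measurableSet_SO)).mpr ?_
      filter_upwards [haeν] with z hz
      filter_upwards [hμ.ae_mem] with y hy
      exact ⟨hz, hy⟩
    filter_upwards [hae2] with p hp
    rw [Function.uncurry, Real.norm_eq_abs]
    exact hM _ (SOaux.mul_mem hp.1 hp.2)
  have hleft : ∫ z, (∫ y, f (z * y) ∂μ) ∂ν = ∫ y, f y ∂μ := by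
    have h : ∀ᵐ z ∂ν, (∫ y, f (z * y) ∂μ) = ∫ y, f y ∂μ := by
      filter_upwards [haeν] with z hz
      conv_rhs => rw [← hμ.left_invariant z hz]
      rw [integral_map (hml z).aemeasurable hf.aestronglyMeasurable]
    rw [integral_congr_ae h, integral_const, probReal_univ]
    simp
  have hright : ∫ y, (∫ z, f (z * y) ∂ν) ∂μ = ∫ z, f z ∂ν := by
    have h : ∀ᵐ y ∂μ, (∫ z, f (z * y) ∂ν) = ∫ z, f z ∂ν := by
      filter_upwards [hμ.ae_mem] with y hy
      conv_rhs => rw [← hrinv y hy]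
      rw [integral_map (hmr y).aemeasurable hf.aestronglyMeasurable]
    rw [integral_congr_ae h, integral_const, probReal_univ]
    simp
  have hswap := integral_integral_swap hint
  have hexch : ∫ y, f y ∂μ = ∫ z, f z ∂ν := by
    rw [← hleft, hswap, hright]
  rw [hexch, hν, integral_map htm.aemeasurable hf.aestronglyMeasurable]

end Exchange


theorem integral_rotational_operators_diagonal_case (n : ℕ) (hn : 1 ≤ n)
    (μ : Measure (Matrix (Fin n) (Fin n) ℝ)) (hμ : IsHaarSO n μ)
    (x : Fin n → ℝ) (i j : Fin n) (hij : i ≠ j) :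
    (∫ y, (x j * y j i - x i * y i j) * Real.exp (∑ k, x k * y k k) ∂μ) = 0 ∧
    (∫ y, (x j * y i j - x i * y j i) * Real.exp (∑ k, x k * y k k) ∂μ) = 0 := by
  haveI : IsProbabilityMeasure μ := hμ.isProbabilityMeasure
  have goal2 : (∫ y, (x j * y i j - x i * y j i) * Real.exp (∑ k, x k * y k k) ∂μ) = 0 :=
    aux_left hμ.ae_mem hμ.left_invariant x i j hij
  refine ⟨?_, goal2⟩
  set f : Matrix (Fin n) (Fin n) ℝ → ℝ :=
    fun y => (x j * y j i - x i * y i j) * Real.exp (∑ k, x k * y k k) with hfdef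
  have hf : Continuous f :=
    ((continuous_const.mul (continuous_entry j i)).sub
      (continuous_const.mul (continuous_entry i j))).mul
      (Real.continuous_exp.comp (continuous_trace_sum x))
  have hM : ∀ y ∈ SO n, |f y| ≤ (|x j| + |x i|) * Real.exp (∑ k, |x k|) := by
    intro y hy
    have hent : ∀ a b, |y a b| ≤ 1 := fun a b => SOaux.entry_le_one hy a b
    have h1 : |x j * y j i - x i * y i j| ≤ |x j| + |x i| := by
      calc |x j * y j i - x i * y i j| ≤ |x j * y j i| + |x i * y i j| := abs_sub _ _
        _ ≤ |x j| + |x i| := by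
            rw [abs_mul, abs_mul]
            exact add_le_add
              ((mul_le_mul_of_nonneg_left (hent j i) (abs_nonneg _)).trans
                (le_of_eq (mul_one _)))
              ((mul_le_mul_of_nonneg_left (hent i j) (abs_nonneg _)).trans
                (le_of_eq (mul_one _)))
    have h2 : Real.exp (∑ k, x k * y k k) ≤ Real.exp (∑ k, |x k|) := by
      apply Real.exp_le_exp.mpr
      calc ∑ k, x k * y k k ≤ |∑ k, x k * y k k| := le_abs_self _
        _ ≤ ∑ k, |x k * y k k| := Finset.abs_sum_le_sum_abs _ _
        _ ≤ ∑ k, |x k| := Finset.sum_le_sum fun k _ => by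
            rw [abs_mul]
            exact (mul_le_mul_of_nonneg_left (hent k k) (abs_nonneg _)).trans
              (le_of_eq (mul_one _))
    calc |f y| = |x j * y j i - x i * y i j| * Real.exp (∑ k, x k * y k k) := by
          rw [hfdef, abs_mul, abs_of_pos (Real.exp_pos _)]
      _ ≤ (|x j| + |x i|) * Real.exp (∑ k, |x k|) := by
          apply mul_le_mul h1 h2 (le_of_lt (Real.exp_pos _)) (by positivity)
  have hex := exchange hμ f hf _ hM
  have heq : (fun y : Matrix (Fin n) (Fin n) ℝ => f yᵀ)
      = fun y => (x j * y i j - x i * y j i) * Real.exp (∑ k, x k * y k k) := by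
    funext y
    simp [hfdef, transpose_apply]
  calc (∫ y, f y ∂μ) = ∫ y, f yᵀ ∂μ := hex
    _ = 0 := by rw [heq]; exact goal2
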